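/- In the model W = ℕ with uniform evidence ℰ = {[N,∞) : N ∈ ℕ} ∪ {ℕ}, the derived belief relation B_ℰ is empty, while in the one-point model with a single evidence set over {w}, the point w satisfies w B w. Hence the derived belief modality [B] is not invariant under the evidence p-morphism conditions satisfied by the constant map ℕ → {w}; i.e., [B] is not definable from [A], [E], [≼] over uniform intended evidence models. -/

import Mathlib

def FIP {W : Type*} (𝒳 : Set (Set W)) : Prop :=
  ∀ 𝒴 ⊆ 𝒳, 𝒴.Finite → (⋂₀ 𝒴).Nonempty

def UScenario {W : Type*} (ℰ : Set (Set W)) (𝒳 : Set (Set W)) : Prop :=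
  𝒳 ⊆ ℰ ∧ FIP 𝒳 ∧ ∀ 𝒴, 𝒳 ⊆ 𝒴 → 𝒴 ⊆ ℰ → FIP 𝒴 → 𝒴 = 𝒳

def USpecLE {W : Type*} (ℰ : Set (Set W)) (w v : W) : Prop :=
  ∀ X ∈ ℰ, w ∈ X → v ∈ X

lemma fip_E1 : FIP ({X | ∃ N : ℕ, X = Set.Ici N} ∪ {Set.univ} : Set (Set ℕ)) := by
  intro 𝒴 h𝒴 hfin
  have key : 𝒴 ⊆ ({X | ∃ N : ℕ, X = Set.Ici N} ∪ {Set.univ} : Set (Set ℕ)) →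
      ∃ M : ℕ, ∀ X ∈ 𝒴, Set.Ici M ⊆ X := by
    refine Set.Finite.induction_on (motive := fun 𝒴 _ => 𝒴 ⊆ ({X | ∃ N : ℕ, X = Set.Ici N} ∪ {Set.univ} : Set (Set ℕ)) →
        ∃ M : ℕ, ∀ X ∈ 𝒴, Set.Ici M ⊆ X) 𝒴 hfin (fun _ => ⟨0, by simp⟩) ?_
    rintro X S _ _ ih hsub
    obtain ⟨M, hM⟩ := ih (fun Y hY => hsub (Set.mem_insert_of_mem _ hY))
    have hX := hsub (Set.mem_insert X S)
    rcases hX with ⟨N, rfl⟩ | hX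
    · exact ⟨max M N, fun Y hY => by
        rcases hY with rfl | hY
        · exact fun x hx => le_trans (le_max_right M N) hx
        · exact fun x hx => hM Y hY (le_trans (le_max_left M N) hx)⟩
    · refine ⟨M, fun Y hY => ?_⟩
      rcases hY with rfl | hY
      · simp [Set.mem_singleton_iff.mp hX]
      · exact hM Y hY
  obtain ⟨M, hM⟩ := key h𝒴
  exact ⟨M, fun X hX => hM X hX (le_refl M)⟩

theorem stmt_18 :
    let ℰ₁ : Set (Set ℕ) := {X | ∃ N : ℕ, X = Set.Ici N} ∪ {Set.univ}
    let ℰ₂ : Set (Set Unit) := {Set.univ}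
    let π : ℕ → Unit := fun _ => ()
    -- B_ℰ is empty on the source...
    (∀ v : ℕ, ¬ ∃ 𝒳, UScenario ℰ₁ 𝒳 ∧ v ∈ ⋂₀ 𝒳) ∧
    -- ...but the single point of the target is derived-belief accessible
    (∃ 𝒳, UScenario ℰ₂ 𝒳 ∧ () ∈ ⋂₀ 𝒳) ∧
    -- the constant map satisfies the evidence forth/back conditions
    (∀ X ∈ ℰ₁, ∃ Y ∈ ℰ₂, Y ⊆ π '' X) ∧
    (∀ Y ∈ ℰ₂, ∃ X ∈ ℰ₁, π '' X ⊆ Y) ∧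
    -- and the plausibility forth/back conditions for the derived orders
    (∀ w v : ℕ, USpecLE ℰ₁ w v → USpecLE ℰ₂ (π w) (π v)) ∧
    (∀ (w : ℕ) (u : Unit), USpecLE ℰ₂ (π w) u → ∃ v : ℕ, π v = u ∧ USpecLE ℰ₁ w v) := by
  intro ℰ₁ ℰ₂ π
  refine ⟨?_, ?_, ?_, ?_, ?_, ?_⟩
  · rintro v ⟨𝒳, ⟨hsub, _, hmax⟩, hv⟩
    have h1 : 𝒳 = ℰ₁ := (hmax ℰ₁ hsub (le_refl _) fip_E1).symm
    have := Set.mem_Ici.mp (hv _ (by rw [h1]; exact Or.inl ⟨v + 1, rfl⟩))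
    omega
  · refine ⟨{Set.univ}, ⟨le_refl _, ?_, ?_⟩, by simp⟩
    · intro 𝒴 h𝒴 _
      by_cases h : Set.univ ∈ 𝒴
      · refine ⟨(), fun X hX => ?_⟩
        have := h𝒴 hX; simp_all
      · have : 𝒴 = ∅ := by
          ext X; simp only [Set.mem_empty_iff_false, iff_false]
          intro hX; have := h𝒴 hX; simp_all
        simp [this]
    · intro 𝒴 h1 h2 _
      apply le_antisymm h2
      exact h1
  · rintro X (⟨N, rfl⟩ | hX)
    · exact ⟨Set.univ, rfl, fun u _ => ⟨N, le_refl N, rfl⟩⟩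
    · exact ⟨Set.univ, rfl, fun u _ => ⟨0, by simp_all, rfl⟩⟩
  · intro Y hY
    refine ⟨Set.univ, Or.inr rfl, ?_⟩
    have : Y = Set.univ := hY
    rw [this]; exact Set.subset_univ _
  · intro w v _ X hX hw
    simp_all
  · intro w u _
    exact ⟨w, rfl, fun X _ h => h⟩
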